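/- The normal closure in FreeGroup (X ⊕ Y) of the set of Peiffer elements { a * b * a⁻¹ * (s0(d1 a) * b * s0(d1 a)⁻¹)⁻¹ | a ∈ K0, b ∈ K0 } equals the commutator subgroup ⁅K0, K1⁆ of the two kernels. (This is the discrete form of the identity P_u(A) = [Ker d0, Ker d1](A) used to construct the crossed module of the presentation.) -/

import Mathlib

/-- The degeneracy `s₀ : F(X) → F(X ⊕ Y)`, sending each generator `x` to `Sum.inl x`. -/
def s0 (X Y : Type*) : FreeGroup X →* FreeGroup (X ⊕ Y) :=
  FreeGroup.lift fun x => FreeGroup.of (Sum.inl x)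

/-- The face map `d₀ : F(X ⊕ Y) → F(X)`, with `d₀ x = x` and `d₀ y = 1`. -/
def d0 (X Y : Type*) : FreeGroup (X ⊕ Y) →* FreeGroup X :=
  FreeGroup.lift (Sum.elim FreeGroup.of fun _ => 1)

/-- The face map `d₁ : F(X ⊕ Y) → F(X)`, with `d₁ x = x` and `d₁ y = r y`. -/
def d1 {X Y : Type*} (r : Y → FreeGroup X) : FreeGroup (X ⊕ Y) →* FreeGroup X :=
  FreeGroup.lift (Sum.elim FreeGroup.of r)

lemma d0_s0 {X Y : Type*} (g : FreeGroup X) : d0 X Y (s0 X Y g) = g := by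
  have : (d0 X Y).comp (s0 X Y) = MonoidHom.id _ :=
    FreeGroup.ext_hom _ _ (by simp [d0, s0])
  exact DFunLike.congr_fun this g

lemma d1_s0 {X Y : Type*} (r : Y → FreeGroup X) (g : FreeGroup X) :
    d1 r (s0 X Y g) = g := by
  have : (d1 r).comp (s0 X Y) = MonoidHom.id _ :=
    FreeGroup.ext_hom _ _ (by simp [d1, s0])
  exact DFunLike.congr_fun this g

open scoped commutatorElement

/-- The normal closure of the set of Peiffer elements
`a * b * a⁻¹ * (ˢ⁰⁽ᵈ¹ ᵃ⁾b)⁻¹` (for `a, b ∈ K₀ = ker d₀`) equals the commutator subgroup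
`⁅K₀, K₁⁆ = ⁅ker d₀, ker d₁⁆`.  This is the discrete form of the identity
`P_u(A) = [Ker d₀, Ker d₁](A)` used to construct the crossed module of the presentation. -/
theorem normalClosure_peiffer_eq_commutator {X Y : Type*} (r : Y → FreeGroup X) :
    Subgroup.normalClosure
        {x : FreeGroup (X ⊕ Y) |
          ∃ a ∈ (d0 X Y).ker, ∃ b ∈ (d0 X Y).ker,
            x = a * b * a⁻¹ * (s0 X Y (d1 r a) * b * (s0 X Y (d1 r a))⁻¹)⁻¹} =
      ⁅(d0 X Y).ker, (d1 r).ker⁆ := by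
  apply le_antisymm
  · apply Subgroup.normalClosure_le_normal
    rintro x ⟨a, ha, b, hb, rfl⟩
    -- the Peiffer element is `a * ⁅b, a⁻¹ * s0 (d1 a)⁆ * a⁻¹`
    have hc : a⁻¹ * s0 X Y (d1 r a) ∈ (d1 r).ker := by
      simp [MonoidHom.mem_ker, d1_s0]
    have hcomm : ⁅b, a⁻¹ * s0 X Y (d1 r a)⁆ ∈ ⁅(d0 X Y).ker, (d1 r).ker⁆ :=
      Subgroup.commutator_mem_commutator hb hc
    have hx : a * b * a⁻¹ * (s0 X Y (d1 r a) * b * (s0 X Y (d1 r a))⁻¹)⁻¹ =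
        a * ⁅b, a⁻¹ * s0 X Y (d1 r a)⁆ * a⁻¹ := by
      simp only [commutatorElement_def]; group
    rw [hx]
    exact (Subgroup.commutator_normal _ _).conj_mem _ hcomm a
  · rw [Subgroup.commutator_le]
    intro a ha k hk
    -- write `k = b * s0 (d1 b)⁻¹` with `b ∈ K₀`
    set b := k * (s0 X Y (d0 X Y k))⁻¹ with hbdef
    have hb : b ∈ (d0 X Y).ker := by
      simp [MonoidHom.mem_ker, hbdef, d0_s0]
    have hsb : s0 X Y (d1 r b) = (s0 X Y (d0 X Y k))⁻¹ := by
      have : d1 r b = (d0 X Y k)⁻¹ := by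
        simp [hbdef, d1_s0, MonoidHom.mem_ker.mp hk]
      rw [this, map_inv]
    set m := (s0 X Y (d1 r b))⁻¹ * a * s0 X Y (d1 r b) with hmdef
    have hm : m ∈ (d0 X Y).ker := by
      simp [MonoidHom.mem_ker, hmdef, MonoidHom.mem_ker.mp ha]
    -- `⁅k, a⁆` is literally the Peiffer element of the pair `(b, m)`
    have hka : ⁅k, a⁆ =
        b * m * b⁻¹ * (s0 X Y (d1 r b) * m * (s0 X Y (d1 r b))⁻¹)⁻¹ := by
      rw [hmdef, hbdef, hsb, commutatorElement_def]; group
    have hmem : ⁅k, a⁆ ∈ Subgroup.normalClosure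
        {x : FreeGroup (X ⊕ Y) |
          ∃ a ∈ (d0 X Y).ker, ∃ b ∈ (d0 X Y).ker,
            x = a * b * a⁻¹ * (s0 X Y (d1 r a) * b * (s0 X Y (d1 r a))⁻¹)⁻¹} :=
      Subgroup.subset_normalClosure ⟨b, hb, m, hm, hka⟩
    have : ⁅a, k⁆ = ⁅k, a⁆⁻¹ := (commutatorElement_inv k a).symm
    rw [this]
    exact inv_mem hmem
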